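/- The intersection of K₊ and K₋ is exactly the singleton {0}: K₊ ∩ K₋ = {0}. -/
import Mathlib


noncomputable section

/-- The affine contraction of ratio 1/100 fixing 0. -/
def T0 (x : ℝ) : ℝ := x / 100

/-- The affine contraction of ratio 1/100 fixing 1. -/
def T1 (x : ℝ) : ℝ := 1 + (x - 1) / 100

/-- The affine contraction of ratio 1/100 fixing -1. -/
def Tm1 (x : ℝ) : ℝ := -1 + (x + 1) / 100

/-- The inverse of `T0`. -/
def T0inv (x : ℝ) : ℝ := 100 * x

/-- The `i`-th iterate of `T0` for `i ≥ 0`, and the `|i|`-th iterate of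
`T0⁻¹ : x ↦ 100 x` for `i < 0`. -/
def T0z : ℤ → ℝ → ℝ
  | Int.ofNat n => T0^[n]
  | Int.negSucc n => T0inv^[n + 1]

/-- The set `K₊ = {0} ∪ ⋃ i ∈ ℤ, T₀^[i] '' (C₁ ∪ C₋₁)` where `C₁ = T₁ '' C`,
`C₋₁ = T₋₁ '' C`. -/
def Kplus (C : Set ℝ) : Set ℝ := {0} ∪ ⋃ i : ℤ, T0z i '' (T1 '' C ∪ Tm1 '' C)

/-- The map `Q : x ↦ x/10`. -/
def Q (x : ℝ) : ℝ := x / 10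

/-- The set `K₋ = Q '' K₊`. -/
def Kminus (C : Set ℝ) : Set ℝ := Q '' Kplus C

/-- The bijection `h` : `x ↦ x/10` for `x ≥ 0`, `x ↦ 10 x` for `x < 0`. -/
def hmap (x : ℝ) : ℝ := if 0 ≤ x then x / 10 else 10 * x

/-- The inverse of `h` : `y ↦ 10 y` for `y ≥ 0`, `y ↦ y/10` for `y < 0`. -/
def hmapInv (y : ℝ) : ℝ := if 0 ≤ y then 10 * y else y / 10

/-- The inverse of `T₋₁` : `x ↦ 100 x + 99`. -/
def Tm1inv (x : ℝ) : ℝ := 100 * x + 99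

lemma T0_iter (n : ℕ) (x : ℝ) : T0^[n] x = x / 100 ^ n := by
  induction n with
  | zero => simp
  | succ n ih => rw [Function.iterate_succ_apply', ih]; unfold T0; ring

lemma T0inv_iter (n : ℕ) (x : ℝ) : T0inv^[n] x = 100 ^ n * x := by
  induction n with
  | zero => simp
  | succ n ih => rw [Function.iterate_succ_apply', ih]; unfold T0inv; ring

lemma T0z_eq (i : ℤ) (x : ℝ) : T0z i x = (100:ℝ) ^ (-i) * x := by
  cases i with
  | ofNat n =>
      show T0^[n] x = _
      rw [T0_iter, show (-(Int.ofNat n)) = -(n:ℤ) from rfl, zpow_neg, zpow_natCast]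
      field_simp
  | negSucc n =>
      show T0inv^[n+1] x = _
      rw [T0inv_iter, show (-(Int.negSucc n)) = ((n+1 : ℕ) : ℤ) from rfl, zpow_natCast]

lemma C_abs_le (C : Set ℝ) (hne : C.Nonempty) (hcomp : IsCompact C)
    (hself : C = Tm1 '' C ∪ T0 '' C ∪ T1 '' C) : ∀ x ∈ C, |x| ≤ 1 := by
  obtain ⟨z, hz, hmax⟩ := hcomp.exists_isMaxOn hne continuous_abs.continuousOn
  have hmax' : ∀ x ∈ C, |x| ≤ |z| := fun x hx => hmax hx
  have hz1 : |z| ≤ 1 := by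
    have hz' : z ∈ Tm1 '' C ∪ T0 '' C ∪ T1 '' C := hself ▸ hz
    rcases hz' with (⟨y, hy, rfl⟩ | ⟨y, hy, rfl⟩) | ⟨y, hy, rfl⟩
    · have hd : |y/100| = |y|/100 := by
        rw [abs_div, abs_of_pos (show (0:ℝ) < 100 by norm_num)]
      have h1 : |Tm1 y| ≤ 99/100 + |y|/100 := by
        have he : Tm1 y = -(99/100) + y/100 := by unfold Tm1; ring
        rw [he]
        have h := abs_add_le (-(99/100):ℝ) (y/100)
        rw [abs_neg, abs_of_pos (show (0:ℝ) < 99/100 by norm_num), hd] at h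
        exact h
      linarith [hmax' y hy]
    · have hd : |y/100| = |y|/100 := by
        rw [abs_div, abs_of_pos (show (0:ℝ) < 100 by norm_num)]
      have h1 : |T0 y| ≤ 99/100 + |y|/100 := by
        have he : T0 y = y/100 := rfl
        rw [he, hd]
        linarith [abs_nonneg y]
      linarith [hmax' y hy]
    · have hd : |y/100| = |y|/100 := by
        rw [abs_div, abs_of_pos (show (0:ℝ) < 100 by norm_num)]
      have h1 : |T1 y| ≤ 99/100 + |y|/100 := by
        have he : T1 y = 99/100 + y/100 := by unfold T1; ring
        rw [he]
        have h := abs_add_le ((99/100):ℝ) (y/100)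
        rw [abs_of_pos (show (0:ℝ) < 99/100 by norm_num), hd] at h
        exact h
      linarith [hmax' y hy]
  exact fun x hx => le_trans (hmax' x hx) hz1

lemma D_bounds (C : Set ℝ) (hC : ∀ x ∈ C, |x| ≤ 1) :
    ∀ x ∈ T1 '' C ∪ Tm1 '' C, 98/100 ≤ |x| ∧ |x| ≤ 1 := by
  rintro x (⟨y, hy, rfl⟩ | ⟨y, hy, rfl⟩)
  · have hy' := abs_le.mp (hC y hy)
    have he : T1 y = 99/100 + y/100 := by unfold T1; ring
    rw [he, abs_of_nonneg (by linarith [hy'.1])]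
    constructor <;> linarith [hy'.1, hy'.2]
  · have hy' := abs_le.mp (hC y hy)
    have he : Tm1 y = -(99/100) + y/100 := by unfold Tm1; ring
    rw [he, abs_of_nonpos (by linarith [hy'.2])]
    constructor <;> linarith [hy'.1, hy'.2]

theorem stmt_8 (C : Set ℝ) (hne : C.Nonempty) (hcomp : IsCompact C)
    (hself : C = Tm1 '' C ∪ T0 '' C ∪ T1 '' C) :
    Kplus C ∩ Kminus C = {0} := by
  have hC := C_abs_le C hne hcomp hself
  have hD := D_bounds C hC
  ext a
  simp only [Set.mem_inter_iff, Set.mem_singleton_iff]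
  constructor
  · rintro ⟨hap, ham⟩
    -- unpack membership in Kplus
    have hap' : a = 0 ∨ ∃ i : ℤ, ∃ x ∈ T1 '' C ∪ Tm1 '' C, a = (100:ℝ) ^ (-i) * x := by
      rcases hap with h0 | hU
      · exact Or.inl h0
      · right
        simp only [Set.mem_iUnion, Set.mem_image] at hU
        obtain ⟨i, x, hx, hax⟩ := hU
        exact ⟨i, x, hx, by rw [← hax, T0z_eq]⟩
    obtain ⟨b, hb, hab⟩ := ham
    have hb' : b = 0 ∨ ∃ j : ℤ, ∃ y ∈ T1 '' C ∪ Tm1 '' C, b = (100:ℝ) ^ (-j) * y := by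
      rcases hb with h0 | hU
      · exact Or.inl h0
      · right
        simp only [Set.mem_iUnion, Set.mem_image] at hU
        obtain ⟨j, y, hy, hby⟩ := hU
        exact ⟨j, y, hy, by rw [← hby, T0z_eq]⟩
    rcases hap' with rfl | ⟨i, x, hx, hax⟩
    · rfl
    rcases hb' with rfl | ⟨j, y, hy, hby⟩
    · rw [← hab]; unfold Q; norm_num
    exfalso
    have hQ : a = b / 10 := hab ▸ rfl
    have hp : (0:ℝ) < (100:ℝ) ^ (-i) := zpow_pos (by norm_num) _
    have hq : (0:ℝ) < (100:ℝ) ^ (-j) := zpow_pos (by norm_num) _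
    have hxb := hD x hx
    have hyb := hD y hy
    have ha1 : |a| = (100:ℝ) ^ (-i) * |x| := by
      rw [hax, abs_mul, abs_of_pos hp]
    have ha2 : |a| = (100:ℝ) ^ (-j) * |y| / 10 := by
      rw [hQ, hby, abs_div, abs_mul, abs_of_pos hq]; norm_num
    -- two inequalities
    have key1 : 98/100 * (100:ℝ) ^ (-i) ≤ (100:ℝ) ^ (-j) / 10 := by
      have h1 : 98/100 * (100:ℝ) ^ (-i) ≤ |a| := by
        rw [ha1]; nlinarith [hxb.1, hp.le]
      have h2 : |a| ≤ (100:ℝ) ^ (-j) / 10 := by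
        rw [ha2]; nlinarith [hyb.2, hq.le]
      linarith
    have key2 : 98/100 * (100:ℝ) ^ (-j) / 10 ≤ (100:ℝ) ^ (-i) := by
      have h1 : 98/100 * (100:ℝ) ^ (-j) / 10 ≤ |a| := by
        rw [ha2]; nlinarith [hyb.1, hq.le]
      have h2 : |a| ≤ (100:ℝ) ^ (-i) := by
        rw [ha1]; nlinarith [hxb.2, hp.le]
      linarith
    -- translate to a power 100^(i-j)
    have hdiv : (100:ℝ) ^ (-j) / (100:ℝ) ^ (-i) = (100:ℝ) ^ (i - j) := by
      rw [← zpow_sub₀ (by norm_num : (100:ℝ) ≠ 0)]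
      ring_nf
    have hlow : (98/10 : ℝ) ≤ (100:ℝ) ^ (i - j) := by
      rw [← hdiv, le_div_iff₀ hp]
      linarith
    have hhigh : (100:ℝ) ^ (i - j) ≤ 1000/98 := by
      rw [← hdiv, div_le_iff₀ hp]
      nlinarith
    rcases le_or_gt (i - j) 0 with hk | hk
    · have : (100:ℝ) ^ (i - j) ≤ 1 := zpow_le_one_of_nonpos₀ (by norm_num) hk
      linarith
    · have h1k : (1:ℤ) ≤ i - j := hk
      have : (100:ℝ) ^ (1:ℤ) ≤ (100:ℝ) ^ (i - j) :=
        zpow_le_zpow_right₀ (by norm_num) h1k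
      rw [zpow_one] at this
      linarith
  · rintro rfl
    refine ⟨Or.inl rfl, ⟨0, Or.inl rfl, ?_⟩⟩
    unfold Q; norm_num
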